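/- Let C ∈ M_{n-1} and let V = k·p_n be a 1-dimensional space placed in degree n. Then the graded 2-cocycles θ ∈ Z²_g(p(C),V), identified with tuples (θ_1,...,θ_{n-1}) ∈ k^{n-1} via θ(p_i,p_j) = δ_{i+j,n} θ_i p_n, are exactly the tuples satisfying θ_i = θ_{n-i} for all i, and θ_{i+j} c_{ij} = θ_{j+k} c_{jk} for all i,j,k ≥ 1 with i+j+k = n. -/

import Mathlib

/-- Bilinear multiplication determined by the coefficient matrix `c`:
`p_i p_j = c i j • p_{i+j}`. -/
def dmul {K : Type*} [Field K] (c : ℕ → ℕ → K) (x y : ℕ → K) : ℕ → K :=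
  fun m => ∑ i ∈ Finset.range (m + 1), c i (m - i) * x i * y (m - i)

/-- The bilinear map `p(C) × p(C) → V = k·p_n` (written via its coefficient in `p_n`)
associated with a tuple `t`: `θ(p_i, p_j) = δ_{i+j,n} t_i p_n`. -/
def Bform {K : Type*} [Field K] (n : ℕ) (t : ℕ → K) (x y : ℕ → K) : K :=
  ∑ i ∈ Finset.Ico 1 n, t i * x i * y (n - i)

lemma Bform_single {K : Type*} [Field K] (n i j : ℕ) (t : ℕ → K) (a b : K)
    (hi : i ∈ Finset.Ico 1 n) (hij : n - i = j) :
    Bform n t (Pi.single i a) (Pi.single j b) = t i * a * b := by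
  unfold Bform
  rw [Finset.sum_eq_single_of_mem i hi]
  · rw [Pi.single_eq_same, hij, Pi.single_eq_same]
  · intro m _ hne
    rw [Pi.single_eq_of_ne hne, mul_zero, zero_mul]

lemma dmul_single {K : Type*} [Field K] (c : ℕ → ℕ → K) (i j : ℕ) :
    dmul c (Pi.single i (1:K)) (Pi.single j (1:K)) = Pi.single (i + j) (c i j) := by
  funext m
  unfold dmul
  by_cases h : m = i + j
  · subst h
    rw [Finset.sum_eq_single_of_mem i (by simp [Nat.lt_succ_iff])]
    · rw [Pi.single_eq_same, show i + j - i = j by omega, Pi.single_eq_same,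
        Pi.single_eq_same, mul_one, mul_one]
    · intro a _ hne; rw [Pi.single_eq_of_ne hne, mul_zero, zero_mul]
  · rw [Pi.single_eq_of_ne h]
    apply Finset.sum_eq_zero
    intro a ha
    by_cases hai : a = i
    · subst hai
      have hmem : a ≤ m := by simpa [Nat.lt_succ_iff] using ha
      have : m - a ≠ j := by omega
      rw [Pi.single_eq_of_ne this, mul_zero]
    · rw [Pi.single_eq_of_ne hai, mul_zero, zero_mul]

theorem stmt_6 {K : Type*} [Field K] (n : ℕ) (hn : 2 ≤ n) (c : ℕ → ℕ → K)
    (hsym : ∀ i j, c i j = c j i)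
    (hassoc : ∀ i j l, 1 ≤ i → 1 ≤ j → 1 ≤ l →
      c j l * c i (j + l) = c i j * c (i + j) l)
    (hzero : ∀ i j, i = 0 ∨ j = 0 ∨ n - 1 < i + j → c i j = 0)
    (t : ℕ → K) :
    -- `Bform n t` is a graded 2-cocycle of `p(C)` with values in `V = k·p_n`
    -- (symmetric and invariant) iff the tuple `t` satisfies the stated relations
    ((∀ x y : ℕ → K, Bform n t x y = Bform n t y x) ∧
      (∀ x y z : ℕ → K, Bform n t (dmul c x y) z = Bform n t x (dmul c y z))) ↔
    ((∀ i, 1 ≤ i → i ≤ n - 1 → t i = t (n - i)) ∧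
      (∀ i j l, 1 ≤ i → 1 ≤ j → 1 ≤ l → i + j + l = n →
        t (i + j) * c i j = t (j + l) * c j l)) := by
  constructor
  · rintro ⟨Hs, Ha⟩
    have ts : ∀ i, 1 ≤ i → i ≤ n - 1 → t i = t (n - i) := by
      intro i h1 h2
      have hi : i ∈ Finset.Ico 1 n := by simp [Finset.mem_Ico]; omega
      have hni : n - i ∈ Finset.Ico 1 n := by simp [Finset.mem_Ico]; omega
      have := Hs (Pi.single i (1:K)) (Pi.single (n - i) (1:K))
      rw [Bform_single n i (n - i) t 1 1 hi rfl,
        Bform_single n (n - i) i t 1 1 hni (by omega)] at this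
      simpa using this
    refine ⟨ts, ?_⟩
    intro i j l hi hj hl hsum
    have := Ha (Pi.single i (1:K)) (Pi.single j (1:K)) (Pi.single l (1:K))
    rw [dmul_single, dmul_single] at this
    rw [Bform_single n (i + j) l t (c i j) 1 (by simp [Finset.mem_Ico]; omega) (by omega),
      Bform_single n i (j + l) t 1 (c j l) (by simp [Finset.mem_Ico]; omega) (by omega)] at this
    have hti : t i = t (j + l) := by
      have := ts i hi (by omega)
      rwa [show n - i = j + l by omega] at this
    rw [mul_one] at this
    rw [this, hti]; ring
  · rintro ⟨ts, rel⟩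
    constructor
    · intro x y
      unfold Bform
      refine Finset.sum_nbij' (fun i => n - i) (fun i => n - i) ?_ ?_ ?_ ?_ ?_
      · intro a ha; simp only [Finset.mem_Ico] at ha ⊢; omega
      · intro a ha; simp only [Finset.mem_Ico] at ha ⊢; omega
      · intro a ha; simp only [Finset.mem_Ico] at ha; show n - (n - a) = a; omega
      · intro a ha; simp only [Finset.mem_Ico] at ha; show n - (n - a) = a; omega
      · intro a ha
        simp only [Finset.mem_Ico] at ha
        rw [ts a ha.1 (by omega), show n - (n - a) = a by omega]
        ring
    · intro x y z
      have key1 : Bform n t (dmul c x y) z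
          = ∑ p ∈ Finset.Ico 1 n ×ˢ Finset.Ico 1 n,
              t p.1 * (c p.2 (p.1 - p.2) * x p.2 * y (p.1 - p.2)) * z (n - p.1) := by
        rw [Finset.sum_product]
        unfold Bform dmul
        refine Finset.sum_congr rfl ?_
        intro m hm
        simp only [Finset.mem_Ico] at hm
        rw [Finset.mul_sum, Finset.sum_mul]
        have e1 : ∑ a ∈ Finset.range (m + 1), t m * (c a (m - a) * x a * y (m - a)) * z (n - m)
            = ∑ a ∈ Finset.range n, t m * (c a (m - a) * x a * y (m - a)) * z (n - m) := by
          refine Finset.sum_subset (by intro a ha; simp only [Finset.mem_range] at ha ⊢; omega) ?_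
          intro a _ ha
          simp only [Finset.mem_range, Nat.lt_succ_iff, not_le] at ha
          rw [show m - a = 0 by omega, hzero a 0 (Or.inr (Or.inl rfl))]
          ring
        have e2 : ∑ a ∈ Finset.Ico 1 n, t m * (c a (m - a) * x a * y (m - a)) * z (n - m)
            = ∑ a ∈ Finset.range n, t m * (c a (m - a) * x a * y (m - a)) * z (n - m) := by
          refine Finset.sum_subset
            (by intro a ha; simp only [Finset.mem_Ico, Finset.mem_range] at ha ⊢; omega) ?_
          intro a ha hna
          simp only [Finset.mem_range] at ha
          simp only [Finset.mem_Ico, not_and, not_lt] at hna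
          rw [show a = 0 by omega, hzero 0 (m - 0) (Or.inl rfl)]
          ring
        rw [e1, ← e2]
      have key2 : Bform n t x (dmul c y z)
          = ∑ p ∈ Finset.Ico 1 n ×ˢ Finset.Ico 1 n,
              t p.1 * x p.1 * (c p.2 (n - p.1 - p.2) * y p.2 * z (n - p.1 - p.2)) := by
        rw [Finset.sum_product]
        unfold Bform dmul
        refine Finset.sum_congr rfl ?_
        intro i hi
        simp only [Finset.mem_Ico] at hi
        rw [Finset.mul_sum]
        have e1 : ∑ a ∈ Finset.range (n - i + 1), t i * x i * (c a (n - i - a) * y a * z (n - i - a))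
            = ∑ a ∈ Finset.range n, t i * x i * (c a (n - i - a) * y a * z (n - i - a)) := by
          refine Finset.sum_subset (by intro a ha; simp only [Finset.mem_range] at ha ⊢; omega) ?_
          intro a _ ha
          simp only [Finset.mem_range, Nat.lt_succ_iff, not_le] at ha
          rw [show n - i - a = 0 by omega, hzero a 0 (Or.inr (Or.inl rfl))]
          ring
        have e2 : ∑ a ∈ Finset.Ico 1 n, t i * x i * (c a (n - i - a) * y a * z (n - i - a))
            = ∑ a ∈ Finset.range n, t i * x i * (c a (n - i - a) * y a * z (n - i - a)) := by
          refine Finset.sum_subset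
            (by intro a ha; simp only [Finset.mem_Ico, Finset.mem_range] at ha ⊢; omega) ?_
          intro a ha hna
          simp only [Finset.mem_range] at ha
          simp only [Finset.mem_Ico, not_and, not_lt] at hna
          rw [show a = 0 by omega, hzero 0 (n - i - 0) (Or.inl rfl)]
          ring
        rw [e1, ← e2]
      rw [key1, key2]
      have mid : ∀ p ∈ Finset.Ico 1 n ×ˢ Finset.Ico 1 n,
          t p.1 * x p.1 * (c p.2 (n - p.1 - p.2) * y p.2 * z (n - p.1 - p.2))
          = t (p.1 + p.2) * c p.1 p.2 * x p.1 * y p.2 * z (n - p.1 - p.2) := by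
        rintro ⟨i, j⟩ hp
        simp only [Finset.mem_product, Finset.mem_Ico] at hp
        dsimp only
        by_cases hij : i + j < n
        · have hl1 : 1 ≤ n - i - j := by omega
          have hsum : i + j + (n - i - j) = n := by omega
          have h1 : t (i + j) * c i j = t (j + (n - i - j)) * c j (n - i - j) :=
            rel i j (n - i - j) hp.1.1 hp.2.1 hl1 hsum
          have h2 : t i = t (j + (n - i - j)) := by
            have := ts i hp.1.1 (by omega)
            rwa [show n - i = j + (n - i - j) by omega] at this
          calc t i * x i * (c j (n - i - j) * y j * z (n - i - j))
              = (t (j + (n - i - j)) * c j (n - i - j)) * x i * y j * z (n - i - j) := by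
                rw [← h2]; ring
            _ = (t (i + j) * c i j) * x i * y j * z (n - i - j) := by rw [← h1]
            _ = t (i + j) * c i j * x i * y j * z (n - i - j) := by ring
        · rw [hzero i j (Or.inr (Or.inr (by omega))), show n - i - j = 0 by omega,
            hzero j 0 (Or.inr (Or.inl rfl))]
          ring
      rw [Finset.sum_congr rfl mid]
      have zsub1 : ∑ p ∈ Finset.Ico 1 n ×ˢ Finset.Ico 1 n,
            t p.1 * (c p.2 (p.1 - p.2) * x p.2 * y (p.1 - p.2)) * z (n - p.1)
          = ∑ p ∈ (Finset.Ico 1 n ×ˢ Finset.Ico 1 n).filter (fun p => p.2 < p.1),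
              t p.1 * (c p.2 (p.1 - p.2) * x p.2 * y (p.1 - p.2)) * z (n - p.1) := by
        symm
        refine Finset.sum_subset (Finset.filter_subset _ _) ?_
        intro p hm hp
        have hnp : ¬ p.2 < p.1 := by
          intro hc
          exact hp (Finset.mem_filter.mpr ⟨hm, hc⟩)
        rw [show p.1 - p.2 = 0 by omega, hzero p.2 0 (Or.inr (Or.inl rfl))]
        ring
      have zsub2 : ∑ p ∈ Finset.Ico 1 n ×ˢ Finset.Ico 1 n,
            t (p.1 + p.2) * c p.1 p.2 * x p.1 * y p.2 * z (n - p.1 - p.2)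
          = ∑ p ∈ (Finset.Ico 1 n ×ˢ Finset.Ico 1 n).filter (fun p => p.1 + p.2 < n),
              t (p.1 + p.2) * c p.1 p.2 * x p.1 * y p.2 * z (n - p.1 - p.2) := by
        symm
        refine Finset.sum_subset (Finset.filter_subset _ _) ?_
        intro p hm hp
        have hnp : ¬ p.1 + p.2 < n := by
          intro hc
          exact hp (Finset.mem_filter.mpr ⟨hm, hc⟩)
        rw [hzero p.1 p.2 (Or.inr (Or.inr (by omega)))]
        ring
      rw [zsub1, zsub2]
      refine Finset.sum_nbij' (fun p => (p.2, p.1 - p.2)) (fun p => (p.1 + p.2, p.1)) ?_ ?_ ?_ ?_ ?_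
      · rintro ⟨m, a⟩ hp
        simp only [Finset.mem_filter, Finset.mem_product, Finset.mem_Ico] at hp ⊢
        omega
      · rintro ⟨i, j⟩ hp
        simp only [Finset.mem_filter, Finset.mem_product, Finset.mem_Ico] at hp ⊢
        omega
      · rintro ⟨m, a⟩ hp
        simp only [Finset.mem_filter, Finset.mem_product, Finset.mem_Ico] at hp
        dsimp only
        rw [Prod.mk.injEq]
        omega
      · rintro ⟨i, j⟩ hp
        simp only [Finset.mem_filter, Finset.mem_product, Finset.mem_Ico] at hp
        dsimp only
        rw [Prod.mk.injEq]
        omega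
      · rintro ⟨m, a⟩ hp
        simp only [Finset.mem_filter, Finset.mem_product, Finset.mem_Ico] at hp
        dsimp only
        rw [show a + (m - a) = m by omega, show n - a - (m - a) = n - m by omega]
        ring
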